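/- Let L = L_{-1} ⊕ L_0 ⊕ L_1 be a 3-graded Lie algebra and I an ideal of L. Let π_i denote the canonical projection of L onto L_i (i ∈ {-1, 0, 1}), let J = [[I, I], [I, I]], and let Ĩ = J + π_{-1}(J) + π_1(J). Then Ĩ is a graded ideal of L contained in I. -/

import Mathlib

/-- The canonical projection `π_i` onto the degree-`i` component of a graded module. -/
noncomputable def gproj {Φ : Type*} [CommRing Φ] {L : Type*} [AddCommGroup L] [Module Φ L]
    (𝒜 : ℤ → Submodule Φ L) [DirectSum.Decomposition 𝒜] (i : ℤ) : L →ₗ[Φ] L :=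
  (𝒜 i).subtype ∘ₗ (DirectSum.component Φ ℤ (fun j => ↥(𝒜 j)) i) ∘ₗ
    (DirectSum.decomposeLinearEquiv 𝒜).toLinearMap

section Aux

open DirectSum

variable {Φ : Type*} [CommRing Φ] {L : Type*} [LieRing L] [LieAlgebra Φ L]
  (𝒜 : ℤ → Submodule Φ L) [DirectSum.Decomposition 𝒜]

lemma gproj_apply (i : ℤ) (x : L) :
    gproj 𝒜 i x = (DirectSum.decompose 𝒜 x i : L) := by
  simp [gproj]
  rfl

lemma gproj_mem (i : ℤ) (x : L) : gproj 𝒜 i x ∈ 𝒜 i := by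
  rw [gproj_apply]; exact (DirectSum.decompose 𝒜 x i).2

lemma gproj_of_mem_same {i : ℤ} {x : L} (hx : x ∈ 𝒜 i) : gproj 𝒜 i x = x := by
  rw [gproj_apply]; exact DirectSum.decompose_of_mem_same 𝒜 hx

lemma gproj_of_mem_ne {i j : ℤ} {x : L} (hx : x ∈ 𝒜 i) (hij : i ≠ j) :
    gproj 𝒜 j x = 0 := by
  rw [gproj_apply]; exact DirectSum.decompose_of_mem_ne 𝒜 hx hij

lemma gproj_triv (htriv : ∀ k : ℤ, 1 < |k| → 𝒜 k = ⊥) {k : ℤ} (hk : 1 < |k|)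
    (x : L) : gproj 𝒜 k x = 0 := by
  have h : gproj 𝒜 k x ∈ (⊥ : Submodule Φ L) := by
    rw [← htriv k hk]; exact gproj_mem 𝒜 k x
  simpa using h

lemma gproj_sum3 (htriv : ∀ k : ℤ, 1 < |k| → 𝒜 k = ⊥) (x : L) :
    gproj 𝒜 (-1) x + gproj 𝒜 0 x + gproj 𝒜 1 x = x := by
  classical
  have h := DirectSum.sum_support_decompose 𝒜 x
  have hsub : (DirectSum.decompose 𝒜 x).support ⊆ ({-1, 0, 1} : Finset ℤ) := by
    intro k hk
    by_contra hk'
    simp only [Finset.mem_insert, Finset.mem_singleton] at hk'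
    push_neg at hk'
    have habs : (1:ℤ) < |k| := by
      rcases abs_cases k with ⟨he, _⟩ | ⟨he, _⟩ <;> omega
    have h0 : (DirectSum.decompose 𝒜 x k : L) ∈ (⊥ : Submodule Φ L) := by
      rw [← htriv k habs]; exact (DirectSum.decompose 𝒜 x k).2
    simp only [Submodule.mem_bot] at h0
    exact (DFinsupp.mem_support_iff.mp hk) (Subtype.ext h0)
  have h2 : ∑ i ∈ (DirectSum.decompose 𝒜 x).support, (DirectSum.decompose 𝒜 x i : L) =
      ∑ i ∈ ({-1, 0, 1} : Finset ℤ), (DirectSum.decompose 𝒜 x i : L) :=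
    Finset.sum_subset hsub (fun i _ hi => by simp [DFinsupp.notMem_support_iff.mp hi])
  rw [gproj_apply, gproj_apply, gproj_apply]
  conv_rhs => rw [← h]
  rw [h2, Finset.sum_insert (by decide), Finset.sum_insert (by decide),
    Finset.sum_singleton]
  abel

/-- bracket of a homogeneous element with a projection. -/
lemma gproj_bracket
    (hbracket : ∀ (i j : ℤ) (x y : L), x ∈ 𝒜 i → y ∈ 𝒜 j → ⁅x, y⁆ ∈ 𝒜 (i + j))
    (htriv : ∀ k : ℤ, 1 < |k| → 𝒜 k = ⊥)
    {k : ℤ} {z : L} (hz : z ∈ 𝒜 k) (w : L) (m : ℤ) :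
    gproj 𝒜 (k + m) ⁅z, w⁆ = ⁅z, gproj 𝒜 m w⁆ := by
  have e : ⁅z, w⁆ = ⁅z, gproj 𝒜 (-1) w⁆ + ⁅z, gproj 𝒜 0 w⁆ + ⁅z, gproj 𝒜 1 w⁆ := by
    rw [← lie_add, ← lie_add, gproj_sum3 𝒜 htriv]
  have hm1 : ⁅z, gproj 𝒜 (-1) w⁆ ∈ 𝒜 (k + (-1)) :=
    hbracket _ _ _ _ hz (gproj_mem 𝒜 _ w)
  have hm2 : ⁅z, gproj 𝒜 0 w⁆ ∈ 𝒜 (k + 0) :=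
    hbracket _ _ _ _ hz (gproj_mem 𝒜 _ w)
  have hm3 : ⁅z, gproj 𝒜 1 w⁆ ∈ 𝒜 (k + 1) :=
    hbracket _ _ _ _ hz (gproj_mem 𝒜 _ w)
  rw [e, map_add, map_add]
  by_cases h1 : m = -1
  · subst h1
    rw [gproj_of_mem_same 𝒜 hm1, gproj_of_mem_ne 𝒜 hm2 (by omega),
      gproj_of_mem_ne 𝒜 hm3 (by omega)]
    abel
  by_cases h2 : m = 0
  · subst h2
    rw [gproj_of_mem_same 𝒜 hm2, gproj_of_mem_ne 𝒜 hm1 (by omega),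
      gproj_of_mem_ne 𝒜 hm3 (by omega)]
    abel
  by_cases h3 : m = 1
  · subst h3
    rw [gproj_of_mem_same 𝒜 hm3, gproj_of_mem_ne 𝒜 hm1 (by omega),
      gproj_of_mem_ne 𝒜 hm2 (by omega)]
    abel
  · have hm : 1 < |m| := by rcases abs_cases m with ⟨he, _⟩ | ⟨he, _⟩ <;> omega
    rw [gproj_triv 𝒜 htriv hm, lie_zero,
      gproj_of_mem_ne 𝒜 hm1 (by omega), gproj_of_mem_ne 𝒜 hm2 (by omega),
      gproj_of_mem_ne 𝒜 hm3 (by omega)]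
    abel

/-- projections of a bracket in terms of projections of the factors. -/
lemma gproj_bracket' (hbracket : ∀ (i j : ℤ) (x y : L), x ∈ 𝒜 i → y ∈ 𝒜 j → ⁅x, y⁆ ∈ 𝒜 (i + j))
    (htriv : ∀ k : ℤ, 1 < |k| → 𝒜 k = ⊥) (n : ℤ) (x y : L) :
    gproj 𝒜 n ⁅x, y⁆ =
      ⁅gproj 𝒜 (-1) x, gproj 𝒜 (n + 1) y⁆ + ⁅gproj 𝒜 0 x, gproj 𝒜 n y⁆ +
        ⁅gproj 𝒜 1 x, gproj 𝒜 (n - 1) y⁆ := by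
  have e : ⁅x, y⁆ = ⁅gproj 𝒜 (-1) x, y⁆ + ⁅gproj 𝒜 0 x, y⁆ + ⁅gproj 𝒜 1 x, y⁆ := by
    rw [← add_lie, ← add_lie, gproj_sum3 𝒜 htriv]
  have e1 : gproj 𝒜 n ⁅gproj 𝒜 (-1) x, y⁆ = ⁅gproj 𝒜 (-1) x, gproj 𝒜 (n + 1) y⁆ := by
    have := gproj_bracket 𝒜 hbracket htriv (gproj_mem 𝒜 (-1) x) y (n + 1)
    rwa [show (-1 : ℤ) + (n + 1) = n by ring] at this
  have e2 : gproj 𝒜 n ⁅gproj 𝒜 0 x, y⁆ = ⁅gproj 𝒜 0 x, gproj 𝒜 n y⁆ := by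
    have := gproj_bracket 𝒜 hbracket htriv (gproj_mem 𝒜 0 x) y n
    rwa [show (0 : ℤ) + n = n by ring] at this
  have e3 : gproj 𝒜 n ⁅gproj 𝒜 1 x, y⁆ = ⁅gproj 𝒜 1 x, gproj 𝒜 (n - 1) y⁆ := by
    have := gproj_bracket 𝒜 hbracket htriv (gproj_mem 𝒜 1 x) y (n - 1)
    rwa [show (1 : ℤ) + (n - 1) = n by ring] at this
  rw [e, map_add, map_add, e1, e2, e3]

end Aux

section Combos

variable {L : Type*} [LieRing L]

/-- pure bracket identity used for Step A, `+` version. -/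
lemma combo1 (xm x0 x1 ym y0 y1 : L) (h11 : ⁅x1, y1⁆ = 0) (hmm : ⁅xm, ym⁆ = 0) :
    (⁅xm, y1⁆ + ⁅x0, y0⁆ + ⁅x1, ym⁆) + ((⁅x0, y1⁆ + ⁅x1, y0⁆) + (⁅x0, y1⁆ + ⁅x1, y0⁆)) =
      (⁅xm + x0 + x1, y1⁆ + ⁅xm + x0 + x1, y1⁆) + ⁅x1, ym + y0 + y1⁆ +
        ⁅xm + x0 + x1, y0⁆ - ⁅xm, ym + y0 + y1⁆ := by
  simp only [lie_add, add_lie, h11, hmm]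
  abel

/-- pure bracket identity used for Step A, `-` version. -/
lemma combo2 (xm x0 x1 ym y0 y1 : L) (h11 : ⁅x1, y1⁆ = 0) (hmm : ⁅xm, ym⁆ = 0) :
    (⁅xm, y1⁆ + ⁅x0, y0⁆ + ⁅x1, ym⁆) + ((⁅xm, y0⁆ + ⁅x0, ym⁆) + (⁅xm, y0⁆ + ⁅x0, ym⁆)) =
      (⁅xm + x0 + x1, ym⁆ + ⁅xm + x0 + x1, ym⁆) + ⁅xm, ym + y0 + y1⁆ +
        ⁅xm + x0 + x1, y0⁆ - ⁅x1, ym + y0 + y1⁆ := by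
  simp only [lie_add, add_lie, h11, hmm]
  abel

/-- pure bracket identity used for Step B. -/
lemma combo3 (a0 a1 b0 b1 : L) (h11 : ⁅a1, b1⁆ = 0) :
    ⁅a0, b1⁆ + ⁅a1, b0⁆ = ⁅a0 + (a1 + a1), b1⁆ + ⁅a1, b0 + (b1 + b1)⁆ := by
  simp only [lie_add, add_lie, h11]
  abel

end Combos

section Steps

variable {Φ : Type*} [CommRing Φ] {L : Type*} [LieRing L] [LieAlgebra Φ L]
  (𝒜 : ℤ → Submodule Φ L) [DirectSum.Decomposition 𝒜]

lemma bracket_gproj_zero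
    (hbracket : ∀ (i j : ℤ) (x y : L), x ∈ 𝒜 i → y ∈ 𝒜 j → ⁅x, y⁆ ∈ 𝒜 (i + j))
    (htriv : ∀ k : ℤ, 1 < |k| → 𝒜 k = ⊥) {i j : ℤ} (hij : 1 < |i + j|) (x y : L) :
    ⁅gproj 𝒜 i x, gproj 𝒜 j y⁆ = 0 := by
  have h : ⁅gproj 𝒜 i x, gproj 𝒜 j y⁆ ∈ (⊥ : Submodule Φ L) := by
    rw [← htriv (i + j) hij]
    exact hbracket i j _ _ (gproj_mem 𝒜 i x) (gproj_mem 𝒜 j y)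
  simpa using h

lemma stepA
    (hbracket : ∀ (i j : ℤ) (x y : L), x ∈ 𝒜 i → y ∈ 𝒜 j → ⁅x, y⁆ ∈ 𝒜 (i + j))
    (htriv : ∀ k : ℤ, 1 < |k| → 𝒜 k = ⊥) (I : LieIdeal Φ L) :
    ∀ a ∈ (⁅I, I⁆ : LieIdeal Φ L),
      (gproj 𝒜 0 a + (gproj 𝒜 1 a + gproj 𝒜 1 a) ∈ I) ∧
      (gproj 𝒜 0 a + (gproj 𝒜 (-1) a + gproj 𝒜 (-1) a) ∈ I) := by
  intro a ha
  rw [← LieSubmodule.mem_toSubmodule, LieSubmodule.lieIdeal_oper_eq_linear_span'] at ha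
  induction ha using Submodule.span_induction with
  | mem m hm =>
    obtain ⟨x, hx, y, hy, rfl⟩ := hm
    have e0 := gproj_bracket' 𝒜 hbracket htriv 0 x y
    have e1 := gproj_bracket' 𝒜 hbracket htriv 1 x y
    have em1 := gproj_bracket' 𝒜 hbracket htriv (-1) x y
    norm_num at e0 e1 em1
    rw [gproj_triv 𝒜 htriv (by norm_num : (1:ℤ) < |(2:ℤ)|) y, lie_zero] at e1
    rw [gproj_triv 𝒜 htriv (by norm_num : (1:ℤ) < |(-2:ℤ)|) y, lie_zero] at em1
    rw [zero_add] at e1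
    rw [add_zero] at em1
    have hz1 : ⁅gproj 𝒜 1 x, gproj 𝒜 1 y⁆ = 0 :=
      bracket_gproj_zero 𝒜 hbracket htriv (by norm_num) x y
    have hzm : ⁅gproj 𝒜 (-1) x, gproj 𝒜 (-1) y⁆ = 0 :=
      bracket_gproj_zero 𝒜 hbracket htriv (by norm_num) x y
    have key1 := combo1 (gproj 𝒜 (-1) x) (gproj 𝒜 0 x) (gproj 𝒜 1 x)
      (gproj 𝒜 (-1) y) (gproj 𝒜 0 y) (gproj 𝒜 1 y) hz1 hzm
    have key2 := combo2 (gproj 𝒜 (-1) x) (gproj 𝒜 0 x) (gproj 𝒜 1 x)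
      (gproj 𝒜 (-1) y) (gproj 𝒜 0 y) (gproj 𝒜 1 y) hz1 hzm
    rw [gproj_sum3 𝒜 htriv x, gproj_sum3 𝒜 htriv y] at key1 key2
    have t1 : ⁅x, gproj 𝒜 1 y⁆ ∈ I := by
      rw [← lie_skew]; exact neg_mem (I.lie_mem hx)
    have t2 : ⁅gproj 𝒜 1 x, y⁆ ∈ I := I.lie_mem hy
    have t3 : ⁅x, gproj 𝒜 0 y⁆ ∈ I := by
      rw [← lie_skew]; exact neg_mem (I.lie_mem hx)
    have t4 : ⁅gproj 𝒜 (-1) x, y⁆ ∈ I := I.lie_mem hy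
    have t5 : ⁅x, gproj 𝒜 (-1) y⁆ ∈ I := by
      rw [← lie_skew]; exact neg_mem (I.lie_mem hx)
    constructor
    · rw [e0, e1, key1]
      exact sub_mem (add_mem (add_mem (add_mem t1 t1) t2) t3) t4
    · rw [e0, em1, key2]
      exact sub_mem (add_mem (add_mem (add_mem t5 t5) t4) t3) t2
  | zero => simp
  | add u v _ _ ihu ihv =>
    constructor
    · have e : gproj 𝒜 0 (u + v) + (gproj 𝒜 1 (u + v) + gproj 𝒜 1 (u + v)) =
          (gproj 𝒜 0 u + (gproj 𝒜 1 u + gproj 𝒜 1 u)) +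
            (gproj 𝒜 0 v + (gproj 𝒜 1 v + gproj 𝒜 1 v)) := by
        simp only [map_add]; abel
      rw [e]; exact add_mem ihu.1 ihv.1
    · have e : gproj 𝒜 0 (u + v) + (gproj 𝒜 (-1) (u + v) + gproj 𝒜 (-1) (u + v)) =
          (gproj 𝒜 0 u + (gproj 𝒜 (-1) u + gproj 𝒜 (-1) u)) +
            (gproj 𝒜 0 v + (gproj 𝒜 (-1) v + gproj 𝒜 (-1) v)) := by
        simp only [map_add]; abel
      rw [e]; exact add_mem ihu.2 ihv.2
  | smul c u _ ihu =>
    constructor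
    · have e : gproj 𝒜 0 (c • u) + (gproj 𝒜 1 (c • u) + gproj 𝒜 1 (c • u)) =
          c • (gproj 𝒜 0 u + (gproj 𝒜 1 u + gproj 𝒜 1 u)) := by
        simp only [map_smul, smul_add]
      rw [e]; exact SMulMemClass.smul_mem c ihu.1
    · have e : gproj 𝒜 0 (c • u) + (gproj 𝒜 (-1) (c • u) + gproj 𝒜 (-1) (c • u)) =
          c • (gproj 𝒜 0 u + (gproj 𝒜 (-1) u + gproj 𝒜 (-1) u)) := by
        simp only [map_smul, smul_add]
      rw [e]; exact SMulMemClass.smul_mem c ihu.2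

lemma stepB
    (hbracket : ∀ (i j : ℤ) (x y : L), x ∈ 𝒜 i → y ∈ 𝒜 j → ⁅x, y⁆ ∈ 𝒜 (i + j))
    (htriv : ∀ k : ℤ, 1 < |k| → 𝒜 k = ⊥) (I : LieIdeal Φ L) :
    ∀ x ∈ (⁅(⁅I, I⁆ : LieIdeal Φ L), (⁅I, I⁆ : LieIdeal Φ L)⁆ : LieIdeal Φ L),
      gproj 𝒜 1 x ∈ I ∧ gproj 𝒜 (-1) x ∈ I := by
  intro x hx
  rw [← LieSubmodule.mem_toSubmodule, LieSubmodule.lieIdeal_oper_eq_linear_span'] at hx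
  induction hx using Submodule.span_induction with
  | mem m hm =>
    obtain ⟨a, ha, b, hb, rfl⟩ := hm
    have e1 := gproj_bracket' 𝒜 hbracket htriv 1 a b
    have em1 := gproj_bracket' 𝒜 hbracket htriv (-1) a b
    norm_num at e1 em1
    rw [gproj_triv 𝒜 htriv (by norm_num : (1:ℤ) < |(2:ℤ)|) b, lie_zero] at e1
    rw [gproj_triv 𝒜 htriv (by norm_num : (1:ℤ) < |(-2:ℤ)|) b, lie_zero] at em1
    rw [zero_add] at e1
    rw [add_zero] at em1
    have hz1 : ⁅gproj 𝒜 1 a, gproj 𝒜 1 b⁆ = 0 :=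
      bracket_gproj_zero 𝒜 hbracket htriv (by norm_num) a b
    have hzm : ⁅gproj 𝒜 (-1) a, gproj 𝒜 (-1) b⁆ = 0 :=
      bracket_gproj_zero 𝒜 hbracket htriv (by norm_num) a b
    have hA := stepA 𝒜 hbracket htriv I a ha
    have hB := stepA 𝒜 hbracket htriv I b hb
    constructor
    · have key := combo3 (gproj 𝒜 0 a) (gproj 𝒜 1 a) (gproj 𝒜 0 b) (gproj 𝒜 1 b) hz1
      rw [e1, key]
      refine add_mem ?_ (I.lie_mem hB.1)
      rw [← lie_skew]; exact neg_mem (I.lie_mem hA.1)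
    · have key := combo3 (gproj 𝒜 0 a) (gproj 𝒜 (-1) a) (gproj 𝒜 0 b)
        (gproj 𝒜 (-1) b) hzm
      rw [em1, add_comm ⁅gproj 𝒜 (-1) a, gproj 𝒜 0 b⁆ ⁅gproj 𝒜 0 a, gproj 𝒜 (-1) b⁆, key]
      refine add_mem ?_ (I.lie_mem hB.2)
      rw [← lie_skew]; exact neg_mem (I.lie_mem hA.2)
  | zero => simp
  | add u v _ _ ihu ihv =>
    exact ⟨by rw [map_add]; exact add_mem ihu.1 ihv.1,
      by rw [map_add]; exact add_mem ihu.2 ihv.2⟩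
  | smul c u _ ihu =>
    exact ⟨by rw [map_smul]; exact SMulMemClass.smul_mem c ihu.1,
      by rw [map_smul]; exact SMulMemClass.smul_mem c ihu.2⟩

end Steps

/-- Let `L = L₋₁ ⊕ L₀ ⊕ L₁` be a 3-graded Lie algebra and `I`
an ideal of `L`.  Let `J = ⁅⁅I, I⁆, ⁅I, I⁆⁆` and `Ĩ = J + π₋₁(J) + π₁(J)`.
Then `Ĩ` is a graded ideal of `L` contained in `I`. -/
theorem tilde_ideal_is_graded_ideal_contained_in_ideal
    {Φ : Type*} [CommRing Φ] {L : Type*} [LieRing L] [LieAlgebra Φ L]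
    (𝒜 : ℤ → Submodule Φ L) [DirectSum.Decomposition 𝒜]
    (hbracket : ∀ (i j : ℤ) (x y : L), x ∈ 𝒜 i → y ∈ 𝒜 j → ⁅x, y⁆ ∈ 𝒜 (i + j))
    (htriv : ∀ k : ℤ, 1 < |k| → 𝒜 k = ⊥)
    (I : LieIdeal Φ L)
    (J : LieIdeal Φ L) (hJ : J = ⁅(⁅I, I⁆ : LieIdeal Φ L), (⁅I, I⁆ : LieIdeal Φ L)⁆)
    (Itilde : Submodule Φ L)
    (hItilde : Itilde = J.toSubmodule ⊔ J.toSubmodule.map (gproj 𝒜 (-1)) ⊔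
        J.toSubmodule.map (gproj 𝒜 1)) :
    (∀ x : L, ∀ y ∈ Itilde, ⁅x, y⁆ ∈ Itilde) ∧
    (∀ y ∈ Itilde, ∀ k : ℤ, (DirectSum.decompose 𝒜 y k : L) ∈ Itilde) ∧
    Itilde ≤ I.toSubmodule := by
  -- membership transfers
  have memJ : ∀ {x : L}, x ∈ J.toSubmodule ↔ x ∈ J := fun {x} =>
    LieSubmodule.mem_toSubmodule J
  have memI : ∀ {x : L}, x ∈ I.toSubmodule ↔ x ∈ I := fun {x} =>
    LieSubmodule.mem_toSubmodule I
  -- J ⊆ I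
  have hJI : ∀ x ∈ J, x ∈ I := by
    intro x hx
    rw [hJ] at hx
    exact LieSubmodule.lie_le_left I I
      (LieSubmodule.lie_le_left (⁅I, I⁆ : LieIdeal Φ L) (⁅I, I⁆ : LieIdeal Φ L) hx)
  -- projections of elements of J lie in I
  have hBproj : ∀ x ∈ J, gproj 𝒜 1 x ∈ I ∧ gproj 𝒜 (-1) x ∈ I := by
    intro x hx
    exact stepB 𝒜 hbracket htriv I x (hJ ▸ hx)
  -- all projections of elements of J lie in Itilde
  have hJproj : ∀ j ∈ J, ∀ k : ℤ, gproj 𝒜 k j ∈ Itilde := by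
    intro j hj k
    have hjT : j ∈ J.toSubmodule := memJ.mpr hj
    by_cases hk1 : k = 1
    · subst hk1
      rw [hItilde]
      exact Submodule.mem_sup_right ⟨j, hjT, rfl⟩
    by_cases hkm : k = -1
    · subst hkm
      rw [hItilde]
      exact Submodule.mem_sup_left (Submodule.mem_sup_right ⟨j, hjT, rfl⟩)
    by_cases hk0 : k = 0
    · subst hk0
      have e : gproj 𝒜 0 j = j - gproj 𝒜 (-1) j - gproj 𝒜 1 j := by
        rw [eq_sub_iff_add_eq, eq_sub_iff_add_eq]
        rw [show gproj 𝒜 0 j + gproj 𝒜 1 j + gproj 𝒜 (-1) j =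
          gproj 𝒜 (-1) j + gproj 𝒜 0 j + gproj 𝒜 1 j from by abel]
        exact gproj_sum3 𝒜 htriv j
      rw [e]
      have h1 : j ∈ Itilde := by
        rw [hItilde]; exact Submodule.mem_sup_left (Submodule.mem_sup_left hjT)
      have h2 : gproj 𝒜 (-1) j ∈ Itilde := by
        rw [hItilde]
        exact Submodule.mem_sup_left (Submodule.mem_sup_right ⟨j, hjT, rfl⟩)
      have h3 : gproj 𝒜 1 j ∈ Itilde := by
        rw [hItilde]; exact Submodule.mem_sup_right ⟨j, hjT, rfl⟩
      exact sub_mem (sub_mem h1 h2) h3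
    · have habs : 1 < |k| := by
        rcases abs_cases k with ⟨he, _⟩ | ⟨he, _⟩ <;> omega
      rw [gproj_triv 𝒜 htriv habs j]
      exact zero_mem _
  -- homogeneous elements of Itilde have projections in Itilde
  have hhom : ∀ {i : ℤ} (w : L), w ∈ 𝒜 i → w ∈ Itilde → ∀ k : ℤ,
      gproj 𝒜 k w ∈ Itilde := by
    intro i w hwi hwT k
    by_cases h : i = k
    · subst h; rw [gproj_of_mem_same 𝒜 hwi]; exact hwT
    · rw [gproj_of_mem_ne 𝒜 hwi h]; exact zero_mem _
  -- bracket with projections of J-elements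
  have hlie : ∀ (σ : ℤ) (j : L), j ∈ J → ∀ z : L, ⁅z, gproj 𝒜 σ j⁆ ∈ Itilde := by
    intro σ j hj z
    refine DirectSum.Decomposition.inductionOn 𝒜 (motive := fun z => ⁅z, gproj 𝒜 σ j⁆ ∈ Itilde) ?_ ?_ ?_ z
    · show ⁅(0:L), gproj 𝒜 σ j⁆ ∈ Itilde
      rw [zero_lie]; exact zero_mem _
    · intro i m
      show ⁅(m:L), gproj 𝒜 σ j⁆ ∈ Itilde
      have e := gproj_bracket 𝒜 hbracket htriv m.2 j σ
      rw [← e]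
      exact hJproj ⁅(m : L), j⁆ (J.lie_mem hj) (i + σ)
    · intro m m' hm hm'
      show ⁅m + m', gproj 𝒜 σ j⁆ ∈ Itilde
      rw [add_lie]; exact add_mem hm hm'
  refine ⟨?_, ?_, ?_⟩
  · -- ideal property
    intro z y hy
    rw [hItilde] at hy
    obtain ⟨u, hu, v, hv, rfl⟩ := Submodule.mem_sup.mp hy
    obtain ⟨a, ha, b, hb, rfl⟩ := Submodule.mem_sup.mp hu
    obtain ⟨jb, hjb, rfl⟩ := hb
    obtain ⟨jv, hjv, rfl⟩ := hv
    rw [lie_add, lie_add]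
    refine add_mem (add_mem ?_ ?_) ?_
    · have : ⁅z, a⁆ ∈ J := J.lie_mem (memJ.mp ha)
      rw [hItilde]
      exact Submodule.mem_sup_left (Submodule.mem_sup_left (memJ.mpr this))
    · exact hlie (-1) jb (memJ.mp hjb) z
    · exact hlie 1 jv (memJ.mp hjv) z
  · -- gradedness
    intro y hy k
    rw [← gproj_apply]
    rw [hItilde] at hy
    obtain ⟨u, hu, v, hv, rfl⟩ := Submodule.mem_sup.mp hy
    obtain ⟨a, ha, b, hb, rfl⟩ := Submodule.mem_sup.mp hu
    obtain ⟨jb, hjb, rfl⟩ := hb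
    obtain ⟨jv, hjv, rfl⟩ := hv
    rw [map_add, map_add]
    refine add_mem (add_mem ?_ ?_) ?_
    · exact hJproj a (memJ.mp ha) k
    · refine hhom _ (gproj_mem 𝒜 (-1) jb) ?_ k
      rw [hItilde]
      exact Submodule.mem_sup_left (Submodule.mem_sup_right ⟨jb, hjb, rfl⟩)
    · refine hhom _ (gproj_mem 𝒜 1 jv) ?_ k
      rw [hItilde]
      exact Submodule.mem_sup_right ⟨jv, hjv, rfl⟩
  · -- containment in I
    rw [hItilde]
    refine sup_le (sup_le ?_ ?_) ?_
    · intro x hx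
      exact memI.mpr (hJI x (memJ.mp hx))
    · rintro x ⟨j, hj, rfl⟩
      exact memI.mpr (hBproj j (memJ.mp hj)).2
    · rintro x ⟨j, hj, rfl⟩
      exact memI.mpr (hBproj j (memJ.mp hj)).1
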